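/- Let φ: ℝ → ℝ be a twice continuously differentiable convex function with φ'' > 0. Define the Rényi-type Bregman divergence D_{1+s}(θ‖θ̄) := (φ((1+s)θ - sθ̄) - (1+s)φ(θ) + sφ(θ̄))/s for s > 0. Then for fixed θ ≠ θ̄, the function s ↦ D_{1+s}(θ‖θ̄) is strictly monotonically increasing on (0,∞). -/

import Mathlib

theorem renyi_bregman_strict_mono
    (φ : ℝ → ℝ) (hφ : ContDiff ℝ 2 φ) (hconv : ConvexOn ℝ Set.univ φ)
    (hpos : ∀ x, 0 < deriv (deriv φ) x)
    (θ θbar : ℝ) (hne : θ ≠ θbar) :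
    StrictMonoOn
      (fun s => (φ ((1 + s) * θ - s * θbar) - (1 + s) * φ θ + s * φ θbar) / s)
      (Set.Ioi (0 : ℝ)) := by
  have hsc : StrictConvexOn ℝ Set.univ φ := by
    apply strictConvexOn_of_deriv2_pos convex_univ hφ.continuous.continuousOn
    intro x _
    simpa [Function.iterate_succ, Function.comp] using hpos x
  intro a ha b hb hab
  simp only [Set.mem_Ioi] at ha hb
  set u := θ - θbar with hu
  have hu0 : u ≠ 0 := sub_ne_zero.mpr hne
  have hxy : θ ≠ θ + b * u := by
    intro h
    have : b * u = 0 := by linarith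
    rcases mul_eq_zero.mp this with h' | h'
    · linarith
    · exact hu0 h'
  have key : φ ((1 - a / b) • θ + (a / b) • (θ + b * u)) <
      (1 - a / b) • φ θ + (a / b) • φ (θ + b * u) := by
    refine hsc.2 (Set.mem_univ _) (Set.mem_univ _) hxy ?_ ?_ (by ring)
    · have : a / b < 1 := (div_lt_one hb).mpr hab
      linarith
    · positivity
  have harg : (1 - a / b) • θ + (a / b) • (θ + b * u) = θ + a * u := by
    field_simp
    rw [smul_eq_mul, smul_eq_mul, div_mul_eq_mul_div, div_mul_eq_mul_div, ← add_div, div_eq_iff hb.ne']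
    ring
  rw [harg] at key
  simp only [smul_eq_mul] at key
  have e1 : (1 + a) * θ - a * θbar = θ + a * u := by rw [hu]; ring
  have e2 : (1 + b) * θ - b * θbar = θ + b * u := by rw [hu]; ring
  simp only [e1, e2]
  rw [div_lt_div_iff₀ ha hb]
  have hb' : (b : ℝ) ≠ 0 := ne_of_gt hb
  have key2 : b * φ (θ + a * u) < (b - a) * φ θ + a * φ (θ + b * u) := by
    have := mul_lt_mul_of_pos_left key hb
    field_simp at this
    linarith
  nlinarith [key2]
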